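/- Let h : ℝ^n → (-∞, ∞] be proper, closed, convex with compact domain X, Lipschitz continuous on X with constant Lip(h), and let X^d ⊆ X be finite and nonempty. Then for every y ∈ ℝ^n, 0 ≤ h*(y) - h^{*d}(y) ≤ [‖y‖ + Lip(h)] · d_H(X, X^d), where d_H(X, X^d) = sup_{x ∈ X} min_{z ∈ X^d} ‖x - z‖ is the one-sided Hausdorff distance from X to X^d. -/

import Mathlib

/-- Uniform error bound for discrete conjugation: for `h` proper, closed,
convex and `K`-Lipschitz on its compact domain `X`, and `Xd ⊆ X` finite nonempty,
`0 ≤ h*(y) - h^{*d}(y) ≤ (‖y‖ + K) · d_H(X, Xd)` for every `y`. -/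
theorem conj_sub_discrete_conj_uniform {n : ℕ}
    (h : EuclideanSpace ℝ (Fin n) → ℝ)
    (X : Set (EuclideanSpace ℝ (Fin n))) (hXc : IsCompact X) (hXne : X.Nonempty)
    (hconv : ConvexOn ℝ X h) (hlsc : LowerSemicontinuousOn h X)
    (Xd : Set (EuclideanSpace ℝ (Fin n)))
    (hXdsub : Xd ⊆ X) (hXdfin : Xd.Finite) (hXdne : Xd.Nonempty)
    (K : ℝ) (hK : 0 ≤ K)
    (hlip : ∀ a ∈ X, ∀ b ∈ X, |h a - h b| ≤ K * ‖a - b‖)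
    (y : EuclideanSpace ℝ (Fin n)) :
    0 ≤ sSup ((fun w => (inner ℝ y w : ℝ) - h w) '' X)
          - sSup ((fun w => (inner ℝ y w : ℝ) - h w) '' Xd) ∧
    sSup ((fun w => (inner ℝ y w : ℝ) - h w) '' X)
          - sSup ((fun w => (inner ℝ y w : ℝ) - h w) '' Xd)
      ≤ (‖y‖ + K) * sSup ((fun z => Metric.infDist z Xd) '' X) := by
  set f : EuclideanSpace ℝ (Fin n) → ℝ := fun w => (inner ℝ y w : ℝ) - h w with hf
  have hcontH : ContinuousOn h X := by
    have : LipschitzOnWith K.toNNReal h X := by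
      apply LipschitzOnWith.of_dist_le_mul
      intro a ha b hb
      rw [Real.dist_eq, dist_eq_norm, Real.coe_toNNReal K hK]
      exact hlip a ha b hb
    exact this.continuousOn
  have hcontf : ContinuousOn f X :=
    ((continuous_const.inner continuous_id).continuousOn).sub hcontH
  have hcompX : IsCompact (f '' X) := hXc.image_of_continuousOn hcontf
  have hXimne : (f '' X).Nonempty := hXne.image f
  have hXdimne : (f '' Xd).Nonempty := hXdne.image f
  have hbdd : BddAbove (f '' X) := hcompX.bddAbove
  have hbddd : BddAbove (f '' Xd) := hbdd.mono (Set.image_mono (f := f) hXdsub)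
  have h1 : sSup (f '' Xd) ≤ sSup (f '' X) :=
    csSup_le_csSup hbdd hXdimne (Set.image_mono (f := f) hXdsub)
  refine ⟨by linarith, ?_⟩
  -- maximizer of f on X
  obtain ⟨x, hxX, hxmax⟩ := hXc.exists_isMaxOn hXne hcontf
  have hsX : sSup (f '' X) = f x := by
    apply le_antisymm
    · exact csSup_le hXimne (by rintro _ ⟨a, ha, rfl⟩; exact hxmax ha)
    · exact le_csSup hbdd ⟨x, hxX, rfl⟩
  -- nearest point in Xd
  obtain ⟨z, hzXd, hzdist⟩ :=
    (hXdfin.isCompact).exists_infDist_eq_dist hXdne x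
  have hfz : f z ≤ sSup (f '' Xd) := le_csSup hbddd ⟨z, hzXd, rfl⟩
  -- key estimate
  have hkey : f x - f z ≤ (‖y‖ + K) * dist x z := by
    have h1 : (inner ℝ y x : ℝ) - inner ℝ y z ≤ ‖y‖ * ‖x - z‖ := by
      rw [← inner_sub_right]
      exact (real_inner_le_norm y (x - z))
    have h2 : h z - h x ≤ K * ‖x - z‖ := by
      have := hlip z (hXdsub hzXd) x hxX
      rw [← norm_neg]
      simp only [neg_sub]
      exact (abs_le.mp this).2.trans_eq rfl
    have : f x - f z = ((inner ℝ y x : ℝ) - inner ℝ y z) + (h z - h x) := by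
      simp only [hf]; ring
    rw [this, dist_eq_norm]
    nlinarith [norm_nonneg (x - z)]
  -- infDist bound
  have hinfbdd : BddAbove ((fun z => Metric.infDist z Xd) '' X) := by
    have : ContinuousOn (fun z => Metric.infDist z Xd) X :=
      (Metric.continuous_infDist_pt Xd).continuousOn
    exact (hXc.image_of_continuousOn this).bddAbove
  have hinf : Metric.infDist x Xd ≤ sSup ((fun z => Metric.infDist z Xd) '' X) :=
    le_csSup hinfbdd ⟨x, hxX, rfl⟩
  have hyK : 0 ≤ ‖y‖ + K := by positivity
  calc sSup (f '' X) - sSup (f '' Xd) ≤ f x - f z := by rw [hsX]; linarith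
    _ ≤ (‖y‖ + K) * dist x z := hkey
    _ = (‖y‖ + K) * Metric.infDist x Xd := by rw [hzdist]
    _ ≤ (‖y‖ + K) * sSup ((fun z => Metric.infDist z Xd) '' X) := by
        exact mul_le_mul_of_nonneg_left hinf hyK
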